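/- Let P be a group of errors and 𝒞 an [[n,k,s,m]] morphism. Then 𝒞 is recursive if and only if for every M ∈ 𝕀, every L ∈ P^k of weight 1, and every S ∈ Z^s, the memory component μ(M, L, S) of 𝒞(M, L, S) belongs to M₁. -/

import Mathlib

open scoped BigOperators

namespace Turbo

variable {P : Type} [Group P]

/-- Weight of an error: the number of non-identity coordinates. -/
noncomputable def wt {n : ℕ} (E : Fin n → P) : ℕ := {i | E i ≠ 1}.ncard

/-- Pad a finite sequence of blocks to an infinite one by identity blocks. -/
def pad {β : Type} [One β] {N : ℕ} (x : Fin N → β) : ℕ → β :=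
  fun i => if h : i < N then x ⟨i, h⟩ else 1

/-- All blocks of a stabilizer sequence have coordinates in `Z`. -/
def ZValued (Z : Subgroup P) {s : ℕ} (S : ℕ → Fin s → P) : Prop := ∀ i j, S i j ∈ Z

/-- Intermediate memory error `M_i` of a convolutional morphism built from the seed `F`. -/
def convMem {m k s n : ℕ}
    (F : ((Fin m → P) × (Fin k → P) × (Fin s → P)) → ((Fin n → P) × (Fin m → P)))
    (M : Fin m → P) (L : ℕ → Fin k → P) (S : ℕ → Fin s → P) : ℕ → Fin m → P
  | 0 => M
  | i + 1 => (F (convMem F M L S i, L i, S i)).2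

/-- The `i`-th physical output block `P_{i+1}` of the convolutional morphism. -/
def convOut {m k s n : ℕ}
    (F : ((Fin m → P) × (Fin k → P) × (Fin s → P)) → ((Fin n → P) × (Fin m → P)))
    (M : Fin m → P) (L : ℕ → Fin k → P) (S : ℕ → Fin s → P) (i : ℕ) : Fin n → P :=
  (F (convMem F M L S i, L i, S i)).1

/-- Weight of the physical output `π_N` (first `N` physical blocks). -/
noncomputable def outWt {m k s n : ℕ}
    (F : ((Fin m → P) × (Fin k → P) × (Fin s → P)) → ((Fin n → P) × (Fin m → P)))
    (M : Fin m → P) (L : ℕ → Fin k → P) (S : ℕ → Fin s → P) (N : ℕ) : ℕ :=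
  ∑ i ∈ Finset.range N, wt (convOut F M L S i)

/-- Weight of the full output `𝒞_N(E) = (P_1, …, P_N, M_N)`. -/
noncomputable def fullWt {m k s n : ℕ}
    (F : ((Fin m → P) × (Fin k → P) × (Fin s → P)) → ((Fin n → P) × (Fin m → P)))
    (M : Fin m → P) (L : ℕ → Fin k → P) (S : ℕ → Fin s → P) (N : ℕ) : ℕ :=
  outWt F M L S N + wt (convMem F M L S N)

/-- The output `𝒞_∞(E)` of the infinite convolutional morphism has infinite weight. -/
def InfOutput {m k s n : ℕ}
    (F : ((Fin m → P) × (Fin k → P) × (Fin s → P)) → ((Fin n → P) × (Fin m → P)))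
    (M : Fin m → P) (L : ℕ → Fin k → P) (S : ℕ → Fin s → P) : Prop :=
  {i : ℕ | convOut F M L S i ≠ 1}.Infinite

/-- The information part of an infinite input has exactly one non-identity letter. -/
def OneInfoLetter {k : ℕ} (L : ℕ → Fin k → P) : Prop :=
  ∃! p : ℕ × Fin k, L p.1 p.2 ≠ 1

/-- A recursive `[[n,k,s,m]]` morphism. -/
def Recursive {m k s n : ℕ} (Z : Subgroup P)
    (F : ((Fin m → P) × (Fin k → P) × (Fin s → P)) → ((Fin n → P) × (Fin m → P))) : Prop :=
  ∀ (L : ℕ → Fin k → P) (S : ℕ → Fin s → P),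
    OneInfoLetter L → ZValued Z S → InfOutput F 1 L S

/-- A systematic morphism: the output weight dominates the information weight. -/
def Systematic {m k s n : ℕ}
    (F : ((Fin m → P) × (Fin k → P) × (Fin s → P)) → ((Fin n → P) × (Fin m → P))) : Prop :=
  ∀ (N : ℕ) (M : Fin m → P) (L : ℕ → Fin k → P) (S : ℕ → Fin s → P),
    (∑ i ∈ Finset.range N, wt (L i)) ≤ fullWt F M L S N

/-- The set `M₁` of memory errors giving an infinite output on trivial information input. -/
def M1 {m k s n : ℕ} (Z : Subgroup P)
    (F : ((Fin m → P) × (Fin k → P) × (Fin s → P)) → ((Fin n → P) × (Fin m → P))) :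
    Set (Fin m → P) :=
  {M | ∀ S : ℕ → Fin s → P, ZValued Z S → InfOutput F M 1 S}

/-- The set of candidate speeds of a morphism. -/
def speedSet {m k s n : ℕ} (Z : Subgroup P)
    (F : ((Fin m → P) × (Fin k → P) × (Fin s → P)) → ((Fin n → P) × (Fin m → P))) : Set ℕ :=
  {η | 0 < η ∧ ∀ M ∈ M1 Z F, ∀ S : ℕ → Fin s → P, ZValued Z S → 1 ≤ outWt F M 1 S η}

/-- `η` is the speed of the morphism `F`. -/
def IsSpeed {m k s n : ℕ} (Z : Subgroup P)
    (F : ((Fin m → P) × (Fin k → P) × (Fin s → P)) → ((Fin n → P) × (Fin m → P)))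
    (η : ℕ) : Prop :=
  IsLeast (speedSet Z F) η

/-- The set `𝕀` of memory errors accessible from the identity memory with trivial
information and `Z`-valued stabilizers. -/
def Iset {m k s n : ℕ} (Z : Subgroup P)
    (F : ((Fin m → P) × (Fin k → P) × (Fin s → P)) → ((Fin n → P) × (Fin m → P))) :
    Set (Fin m → P) :=
  {M | ∃ (N : ℕ) (S : ℕ → Fin s → P), ZValued Z S ∧ M = convMem F 1 1 S N}

/- ### Block `[[n,k]]` encoders -/

/-- `E` is undetected for the `[[n,k]]` encoder `C`. -/
def Undetected {k n : ℕ} (Z : Subgroup P)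
    (C : ((Fin k → P) × (Fin (n - k) → P)) ≃* (Fin n → P)) (E : Fin n → P) : Prop :=
  E ≠ 1 ∧ ∀ j, (C.symm E).2 j ∈ Z

/-- `E` is harmful for the `[[n,k]]` encoder `C`. -/
def Harmful {k n : ℕ} (Z : Subgroup P)
    (C : ((Fin k → P) × (Fin (n - k) → P)) ≃* (Fin n → P)) (E : Fin n → P) : Prop :=
  Undetected Z C E ∧ (C.symm E).1 ≠ 1

/-- The distance `d_c` of an `[[n,k]]` encoder. -/
noncomputable def encDist {k n : ℕ} (Z : Subgroup P)
    (C : ((Fin k → P) × (Fin (n - k) → P)) ≃* (Fin n → P)) : ℕ :=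
  sInf {w | ∃ E, Harmful Z C E ∧ wt E = w}

/-- The degenerate distance `d_q` of an `[[n,k]]` encoder. -/
noncomputable def encDegenDist {k n : ℕ} (Z : Subgroup P)
    (C : ((Fin k → P) × (Fin (n - k) → P)) ≃* (Fin n → P)) : ℕ :=
  sInf {w | ∃ E, Undetected Z C E ∧ wt E = w}

/-- Weight distribution `a^{⊗N}(d)` of the blockwise encoder `C^{⊗N}`. -/
noncomputable def aTensor {k n : ℕ} (Z : Subgroup P)
    (C : ((Fin k → P) × (Fin (n - k) → P)) ≃* (Fin n → P)) (N d : ℕ) : ℕ :=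
  Set.ncard {E : (Fin N → Fin k → P) × (Fin N → Fin (n - k) → P) |
    (∀ i j, E.2 i j ∈ Z) ∧ E.1 ≠ 1 ∧ (∑ i, wt (C (E.1 i, E.2 i))) = d}

/- ### `[[n,k,m]]` encoders and their truncated decoders -/

/-- The truncated decoder `C̄` of an `[[n,k,m]]` encoder `C`, as a `[[k,n,0,m]]` morphism. -/
def truncDecoder {m k n : ℕ}
    (C : ((Fin m → P) × (Fin k → P) × (Fin (n - k) → P)) ≃* ((Fin n → P) × (Fin m → P))) :
    ((Fin m → P) × (Fin n → P) × (Fin 0 → P)) → ((Fin k → P) × (Fin m → P)) :=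
  fun x => ((C.symm (x.2.1, x.1)).2.1, (C.symm (x.2.1, x.1)).1)

/-- Weight distribution `a_N(w, d)` of a convolutional morphism. -/
noncomputable def aN {m k s n : ℕ} (Z : Subgroup P)
    (F : ((Fin m → P) × (Fin k → P) × (Fin s → P)) → ((Fin n → P) × (Fin m → P)))
    (N w d : ℕ) : ℕ :=
  Set.ncard {ML : (Fin m → P) × (Fin N → Fin k → P) |
    (wt ML.1 + ∑ i, wt (ML.2 i)) = w ∧
    ∃ S : Fin N → Fin s → P, (∀ i j, S i j ∈ Z) ∧
      fullWt F ML.1 (pad ML.2) (pad S) N = d}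

/-- Weight distribution `a_N(w, ≤ d)` of a convolutional morphism. -/
noncomputable def aNle {m k s n : ℕ} (Z : Subgroup P)
    (F : ((Fin m → P) × (Fin k → P) × (Fin s → P)) → ((Fin n → P) × (Fin m → P)))
    (N w : ℕ) (d : ℝ) : ℕ :=
  Set.ncard {ML : (Fin m → P) × (Fin N → Fin k → P) |
    (wt ML.1 + ∑ i, wt (ML.2 i)) = w ∧
    ∃ S : Fin N → Fin s → P, (∀ i j, S i j ∈ Z) ∧
      (fullWt F ML.1 (pad ML.2) (pad S) N : ℝ) ≤ d}

/- ### Traces and detours -/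

/-- Replace every information letter at (1-indexed flattened) position `> p` by the identity. -/
def truncAfter {k : ℕ} (L : ℕ → Fin k → P) (p : ℕ) : ℕ → Fin k → P :=
  fun i j => if i * k + (j : ℕ) + 1 ≤ p then L i j else 1

/-- `q` is the (1-indexed flattened) position of a non-identity information letter of the
first `N` information blocks. -/
def IsInfoPos {k : ℕ} (N : ℕ) (L : ℕ → Fin k → P) (q : ℕ) : Prop :=
  ∃ (i : ℕ) (j : Fin k), i < N ∧ q = i * k + (j : ℕ) + 1 ∧ L i j ≠ 1

/-- The information part of the `i`-th truncature `E_{∖i}`. -/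
def truncInfo {k : ℕ} (L : ℕ → Fin k → P) (p : ℕ → ℕ) : ℕ → (ℕ → Fin k → P)
  | 0 => 1
  | i + 1 => truncAfter L (p i)

/-- The number `N_i` of blocks making up the `i`-th truncature (with `N_0 = 0`):
the block containing the position `p i`. -/
def cutOf (k : ℕ) (p : ℕ → ℕ) : ℕ → ℕ
  | 0 => 0
  | i + 1 => (p i - 1) / k + 1

/-- Extend a stabilizer sequence: the first `cut` blocks come from `S`, the rest from `St`. -/
def extendS {s : ℕ} (S : ℕ → Fin s → P) (cut : ℕ) (St : ℕ → Fin s → P) : ℕ → Fin s → P :=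
  fun j => if j < cut then S j else St (j - cut)

/-- The intermediate memory error `M_i` attached to the `i`-th truncature `E_{∖i}`. -/
def traceMem {m k s n : ℕ}
    (F : ((Fin m → P) × (Fin k → P) × (Fin s → P)) → ((Fin n → P) × (Fin m → P)))
    (M : Fin m → P) (L : ℕ → Fin k → P) (S : ℕ → Fin s → P) (p : ℕ → ℕ) : ℕ → Fin m → P
  | 0 => M
  | i + 1 => convMem F M (truncAfter L (p i)) S ((p i - 1) / k + 1)

/-- Paper-indexed positions: `pp p 0 = 0` and `pp p j = p (j-1)` for `j ≥ 1`. -/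
def pp (p : ℕ → ℕ) : ℕ → ℕ
  | 0 => 0
  | j + 1 => p j

/-- The segment `[a, c)` of the trace `b` is a terminating detour: a nonempty run of `1`'s
followed by a single final `0`. -/
def IsTermDetour (b : ℕ → Prop) (a c : ℕ) : Prop :=
  a + 1 < c ∧ (∀ t, a ≤ t → t + 1 < c → b t) ∧ ¬ b (c - 1)

/-- The segment `[a, c)` of the trace `b` is a detour: a nonempty run of `1`'s, possibly
completed with a single final `0`. -/
def IsDetour (b : ℕ → Prop) (a c : ℕ) : Prop :=
  (a < c ∧ ∀ t, a ≤ t → t < c → b t) ∨ IsTermDetour b a c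

end Turbo

section Helpers

open Turbo

variable {P : Type} [Group P] {m k s n : ℕ}
  (F : ((Fin m → P) × (Fin k → P) × (Fin s → P)) → ((Fin n → P) × (Fin m → P)))

private lemma convMem_congr (M : Fin m → P) {L L' : ℕ → Fin k → P} {S S' : ℕ → Fin s → P} :
    ∀ i, (∀ j, j < i → L j = L' j) → (∀ j, j < i → S j = S' j) →
      convMem F M L S i = convMem F M L' S' i
  | 0, _, _ => rfl
  | i + 1, hL, hS => by
      simp only [convMem]
      rw [convMem_congr M i (fun j hj => hL j (by omega)) (fun j hj => hS j (by omega)),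
        hL i (by omega), hS i (by omega)]

private lemma convMem_shift (M : Fin m → P) (L : ℕ → Fin k → P) (S : ℕ → Fin s → P) (a : ℕ) :
    ∀ i, convMem F M L S (a + i) =
      convMem F (convMem F M L S a) (fun j => L (a + j)) (fun j => S (a + j)) i
  | 0 => by simp [convMem]
  | i + 1 => by
      have h : a + (i + 1) = (a + i) + 1 := by omega
      rw [h]
      simp only [convMem]
      rw [convMem_shift M L S a i]

private lemma convOut_shift (M : Fin m → P) (L : ℕ → Fin k → P) (S : ℕ → Fin s → P)
    (a i : ℕ) : convOut F M L S (a + i) =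
      convOut F (convMem F M L S a) (fun j => L (a + j)) (fun j => S (a + j)) i := by
  simp only [convOut, convMem_shift F M L S a i]

private lemma infinite_shift {Q : ℕ → Prop} (a : ℕ) (h : {i | Q i}.Infinite) :
    {i | Q (a + i)}.Infinite := by
  by_contra hf
  rw [Set.not_infinite] at hf
  have hs : {i | Q i} ⊆ Set.Iio a ∪ (a + ·) '' {i | Q (a + i)} := by
    intro i hi
    by_cases h' : i < a
    · exact Or.inl h'
    · refine Or.inr ⟨i - a, ?_, show a + (i - a) = i by omega⟩
      have : a + (i - a) = i := by omega
      simpa [Set.mem_setOf_eq, this] using hi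
  exact h (((Set.finite_Iio a).union (hf.image _)).subset hs)

private lemma infinite_unshift {Q : ℕ → Prop} (a : ℕ) (h : {i | Q (a + i)}.Infinite) :
    {i | Q i}.Infinite := by
  have him : ((a + ·) '' {i | Q (a + i)}).Infinite :=
    h.image (Set.injOn_of_injective (fun x y hxy => by omega))
  refine him.mono ?_
  rintro _ ⟨i, hi, rfl⟩
  exact hi

end Helpers

open Turbo in
/-- `𝒞` is recursive iff for every `M ∈ 𝕀`, every information block `L` of weight `1`, and
every `S ∈ Z^s`, the memory component of `𝒞(M, L, S)` belongs to `M₁`. -/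
theorem recursive_iff {P : Type} [Group P] [Finite P] (Z : Subgroup P) (hZ : Z ≠ ⊤)
    {m k s n : ℕ}
    (𝒞 : ((Fin m → P) × (Fin k → P) × (Fin s → P)) →* ((Fin n → P) × (Fin m → P))) :
    Recursive Z ⇑𝒞 ↔
      ∀ M ∈ Iset Z ⇑𝒞, ∀ L : Fin k → P, wt L = 1 → ∀ S : Fin s → P,
        (∀ j, S j ∈ Z) → (𝒞 (M, L, S)).2 ∈ M1 Z ⇑𝒞 := by
  constructor
  · -- recursive → condition
    intro hrec M hM L hL S hS S' hS'
    obtain ⟨N, S₀, hS₀, rfl⟩ := hM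
    obtain ⟨j₀, hj₀⟩ := Set.ncard_eq_one.mp hL
    have hj₀mem : L j₀ ≠ 1 := by
      have : j₀ ∈ {j | L j ≠ 1} := hj₀ ▸ rfl
      exact this
    set Lt : ℕ → Fin k → P := fun i => if i = N then L else 1 with hLt
    set St : ℕ → Fin s → P :=
      fun i => if h : i < N then S₀ i else if i = N then S else S' (i - (N + 1)) with hSt
    have hZSt : ZValued Z St := by
      intro i j
      simp only [hSt]
      split
      · exact hS₀ i j
      · split
        · exact hS j
        · exact hS' _ j
    have hOne : OneInfoLetter Lt := by
      refine ⟨(N, j₀), ?_, ?_⟩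
      · simpa [hLt] using hj₀mem
      · rintro ⟨i, j⟩ hij
        simp only [hLt] at hij
        by_cases hiN : i = N
        · subst hiN
          have : j ∈ {j | L j ≠ 1} := by simpa using hij
          rw [hj₀] at this
          simp_all
        · simp [hiN, Pi.one_apply] at hij
    have hinf := hrec Lt St hOne hZSt
    have hshift := infinite_shift (N + 1) hinf
    have hmemN : convMem (⇑𝒞) 1 Lt St N = convMem (⇑𝒞) 1 1 S₀ N := by
      refine convMem_congr _ _ N (fun j hj => ?_) (fun j hj => ?_)
      · simp [hLt, Nat.ne_of_lt hj]
      · simp [hSt, hj]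
    have hmemN1 : convMem (⇑𝒞) 1 Lt St (N + 1) =
        (𝒞 (convMem (⇑𝒞) 1 1 S₀ N, L, S)).2 := by
      have h1 : Lt N = L := by simp [hLt]
      have h2 : St N = S := by simp [hSt]
      simp only [convMem, hmemN, h1, h2]
    have hout : ∀ i, convOut (⇑𝒞) 1 Lt St (N + 1 + i) =
        convOut (⇑𝒞) (𝒞 (convMem (⇑𝒞) 1 1 S₀ N, L, S)).2 1 S' i := by
      have hLsh : (fun j => Lt (N + 1 + j)) = (1 : ℕ → Fin k → P) := by
        funext j
        have hj : N + 1 + j ≠ N := by omega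
        simp [hLt, hj]
      have hSsh : (fun j => St (N + 1 + j)) = S' := by
        funext j
        have h1 : ¬ N + 1 + j < N := by omega
        have h2 : N + 1 + j ≠ N := by omega
        have h3 : N + 1 + j - (N + 1) = j := by omega
        simp [hSt, h1, h2, h3]
      intro i
      rw [convOut_shift, hmemN1, hLsh, hSsh]
    refine Set.Infinite.mono ?_ (by simpa [hout] using hshift)
    exact fun i hi => hi
  · -- condition → recursive
    intro h L S hOne hS
    obtain ⟨⟨N, j₀⟩, hp, huniq⟩ := hOne
    have hL1 : ∀ i, i ≠ N → L i = 1 := by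
      intro i hi
      funext j
      by_contra hne
      have := huniq (i, j) hne
      simp only [Prod.mk.injEq] at this
      exact hi this.1
    have hwt : wt (L N) = 1 := by
      have hset : {j | L N j ≠ 1} = {j₀} := by
        ext j
        simp only [Set.mem_setOf_eq, Set.mem_singleton_iff]
        constructor
        · intro hj
          exact (Prod.ext_iff.mp (huniq (N, j) hj)).2
        · rintro rfl
          exact hp
      rw [wt, hset, Set.ncard_singleton]
    have hMI : convMem (⇑𝒞) 1 L S N ∈ Iset Z (⇑𝒞) := by
      refine ⟨N, S, hS, ?_⟩
      refine convMem_congr _ _ N (fun j hj => ?_) (fun _ _ => rfl)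
      exact hL1 j (Nat.ne_of_lt hj)
    have hM1 := h _ hMI (L N) hwt (S N) (fun j => hS N j)
    have hinf := hM1 (fun i => S (N + 1 + i)) (fun i j => hS _ j)
    have hmemN1 : convMem (⇑𝒞) 1 L S (N + 1) =
        (𝒞 (convMem (⇑𝒞) 1 L S N, L N, S N)).2 := rfl
    have hout : ∀ i, convOut (⇑𝒞) 1 L S (N + 1 + i) =
        convOut (⇑𝒞) (𝒞 (convMem (⇑𝒞) 1 L S N, L N, S N)).2 1
          (fun i => S (N + 1 + i)) i := by
      have hLsh : (fun j => L (N + 1 + j)) = (1 : ℕ → Fin k → P) := by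
        funext j
        exact hL1 _ (by omega)
      intro i
      rw [convOut_shift, hmemN1, hLsh]
    refine infinite_unshift (N + 1) ?_
    simpa [hout, InfOutput] using hinf
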